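/- For any controls α ∈ 𝖠 and β ∈ 𝖡, the limit of the joint cumulative cost of the coupling equals the difference of the individual limits: lim_{N→∞} C^{γ(α,β)}_N = lim_{N→∞} C^α_N − lim_{N→∞} C^β_N. -/

import Mathlib

open MeasureTheory Filter Set
open scoped Classical

noncomputable section

namespace ZSG

variable {Ω : Type} [MeasurableSpace Ω]
variable {Γ1 : Type} [Fintype Γ1] [DecidableEq Γ1] [Nontrivial Γ1] [MeasurableSpace Γ1]
variable {Γ2 : Type} [Fintype Γ2] [DecidableEq Γ2] [Nontrivial Γ2] [MeasurableSpace Γ2]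

/-- The stochastic data of the finite-horizon two-player zero-sum switching game. -/
structure Data (Ω : Type) [m0 : MeasurableSpace Ω] (Γ1 Γ2 : Type) where
  /-- the underlying probability measure -/
  μ : Measure Ω
  prob : IsProbabilityMeasure μ
  /-- the (Brownian) filtration -/
  filt : Filtration ℝ m0
  /-- the finite horizon -/
  T : ℝ
  Tpos : 0 < T
  /-- running reward paid by player 2 to player 1 in joint mode `(i,j)` -/
  f : Γ1 → Γ2 → ℝ → Ω → ℝ
  /-- terminal reward paid by player 2 to player 1 in joint mode `(i,j)` -/
  h : Γ1 → Γ2 → Ω → ℝ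
  /-- switching costs of player 1 -/
  gh : Γ1 → Γ1 → ℝ → Ω → ℝ
  /-- switching costs of player 2 -/
  gc : Γ2 → Γ2 → ℝ → Ω → ℝ

/-- A switching control: a sequence of nondecreasing stopping times bounded by `T`, a.s.
finitely many switches before `T`, with `F_{σ n}`-measurable mode choices, no two switches of
the same player at the same instant before `T` and a frozen mode at `T`. -/
structure Control (D : Data Ω Γ1 Γ2) (Γ : Type) [MeasurableSpace Γ] where
  τ : ℕ → Ω → ℝ
  ξ : ℕ → Ω → Γ
  stopping : ∀ n, IsStoppingTime D.filt (fun ω => ((τ n ω : ℝ) : WithTop ℝ))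
  mem_Icc : ∀ n ω, τ n ω ∈ Icc (0:ℝ) D.T
  mono : ∀ n, ∀ᵐ ω ∂D.μ, τ n ω ≤ τ (n+1) ω
  no_acc : D.μ {ω | ∀ n, τ n ω < D.T} = 0
  meas : ∀ n, @Measurable Ω Γ ((stopping n).measurableSpace) _ (ξ n)
  strict : ∀ n, 1 ≤ n → ∀ᵐ ω ∂D.μ, τ n ω < D.T → τ n ω < τ (n+1) ω ∧ ξ n ω ≠ ξ (n-1) ω
  stay : ∀ n, 1 ≤ n → ∀ᵐ ω ∂D.μ, τ n ω = D.T → ξ n ω = ξ (n-1) ω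

/-- Cumulative switching cost of the first `N` switches of player 1. -/
def cost1 (D : Data Ω Γ1 Γ2) (A : Control D Γ1) (N : ℕ) (ω : Ω) : ℝ :=
  ∑ n ∈ Finset.range N, D.gh (A.ξ n ω) (A.ξ (n+1) ω) (A.τ (n+1) ω) ω

/-- Cumulative switching cost of the first `N` switches of player 2. -/
def cost2 (D : Data Ω Γ1 Γ2) (B : Control D Γ2) (N : ℕ) (ω : Ω) : ℝ :=
  ∑ n ∈ Finset.range N, D.gc (B.ξ n ω) (B.ξ (n+1) ω) (B.τ (n+1) ω) ω

/-- The limit of the cumulative costs exists a.s. and is square integrable. -/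
def SqLim (μ : Measure Ω) (c : ℕ → Ω → ℝ) : Prop :=
  ∃ L : Ω → ℝ, (∀ᵐ ω ∂μ, Tendsto (fun N => c N ω) atTop (nhds (L ω))) ∧ MemLp L 2 μ

/-- Square-integrable controls for player 1. -/
def SqInt1 (D : Data Ω Γ1 Γ2) (A : Control D Γ1) : Prop := SqLim D.μ (cost1 D A)

/-- Square-integrable controls for player 2. -/
def SqInt2 (D : Data Ω Γ1 Γ2) (B : Control D Γ2) : Prop := SqLim D.μ (cost2 D B)

/-- A control starting at time `s` in mode `i`. -/
def Starts1 (D : Data Ω Γ1 Γ2) (A : Control D Γ1) (s : ℝ) (i : Γ1) : Prop :=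
  (∀ ω, A.τ 0 ω = s) ∧ ∀ ω, A.ξ 0 ω = i

/-- A control starting at time `s` in mode `j`. -/
def Starts2 (D : Data Ω Γ1 Γ2) (B : Control D Γ2) (s : ℝ) (j : Γ2) : Prop :=
  (∀ ω, B.τ 0 ω = s) ∧ ∀ ω, B.ξ 0 ω = j

/-- The index pair `(r_n, s_n)` of the coupling of two controls. -/
def cplIdx (σ τ : ℕ → Ω → ℝ) : ℕ → Ω → ℕ × ℕ
  | 0, _ => (0, 0)
  | 1, _ => (1, 1)
  | (n+2), ω =>
    let p := cplIdx σ τ (n+1) ω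
    (p.1 + (if σ p.1 ω ≤ τ p.2 ω then 1 else 0),
     p.2 + (if τ p.2 ω < σ p.1 ω then 1 else 0))

/-- The switching times `ρ_n = σ_{r_n} ∧ τ_{s_n}` of the coupling. -/
def cplRho (σ τ : ℕ → Ω → ℝ) (n : ℕ) (ω : Ω) : ℝ :=
  min (σ (cplIdx σ τ n ω).1 ω) (τ (cplIdx σ τ n ω).2 ω)

/-- The joint modes `γ_n` of the coupling; player 1's switch is implemented first at ties. -/
def cplGam (T : ℝ) (σ : ℕ → Ω → ℝ) (ξ : ℕ → Ω → Γ1) (τ : ℕ → Ω → ℝ) (ζ : ℕ → Ω → Γ2) :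
    ℕ → Ω → Γ1 × Γ2
  | 0, ω => (ξ 0 ω, ζ 0 ω)
  | (n+1), ω =>
    let p := cplIdx σ τ (n+1) ω
    let prev := cplGam T σ ξ τ ζ n ω
    if σ p.1 ω ≤ τ p.2 ω ∧ σ p.1 ω < T then (ξ p.1 ω, prev.2)
    else if τ p.2 ω < σ p.1 ω then (prev.1, ζ p.2 ω)
    else prev

/-- Joint cumulative cost `C_N = Σ_{n=1}^N [ĝ - ǧ]` of a joint switching sequence `(ρ, γ)`. -/
def seqCost (D : Data Ω Γ1 Γ2) (ρ : ℕ → Ω → ℝ) (γ : ℕ → Ω → Γ1 × Γ2) (N : ℕ) (ω : Ω) : ℝ :=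
  ∑ n ∈ Finset.range N,
    (D.gh (γ n ω).1 (γ (n+1) ω).1 (ρ (n+1) ω) ω - D.gc (γ n ω).2 (γ (n+1) ω).2 (ρ (n+1) ω) ω)

/-- The piecewise-constant joint mode indicator `u_t`. -/
def seqU (ρ : ℕ → Ω → ℝ) (γ : ℕ → Ω → Γ1 × Γ2) (t : ℝ) (ω : Ω) : Γ1 × Γ2 :=
  γ (sInf {n : ℕ | t ≤ ρ (n+1) ω}) ω

/-- Admissibility of a joint switching sequence: `sup_N |C_N| ∈ L²`. -/
def Admissible (D : Data Ω Γ1 Γ2) (ρ : ℕ → Ω → ℝ) (γ : ℕ → Ω → Γ1 × Γ2) : Prop :=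
  (∀ᵐ ω ∂D.μ, BddAbove (Set.range fun N => |seqCost D ρ γ N ω|)) ∧
  MemLp (fun ω => ⨆ N, |seqCost D ρ γ N ω|) 2 D.μ

/-- The total reward `∫ f(u) dt − Σ (ĝ − ǧ) + h(u_T)` of a joint switching sequence. -/
def seqPayoff (D : Data Ω Γ1 Γ2) (s : ℝ) (ρ : ℕ → Ω → ℝ) (γ : ℕ → Ω → Γ1 × Γ2) (ω : Ω) : ℝ :=
  (∫ t in s..D.T, D.f (seqU ρ γ t ω).1 (seqU ρ γ t ω).2 t ω)
  - limUnder atTop (fun N => seqCost D ρ γ N ω)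
  + D.h (seqU ρ γ D.T ω).1 (seqU ρ γ D.T ω).2 ω

/-- The conditional payoff `J^{i,j}_s(γ(α,β))` of the coupled control. -/
def Jc (D : Data Ω Γ1 Γ2) (s : ℝ) (A : Control D Γ1) (B : Control D Γ2) : Ω → ℝ :=
  condExp (D.filt s) D.μ (seqPayoff D s (cplRho A.τ B.τ) (cplGam D.T A.τ A.ξ B.τ B.ξ))

/-- `V` is the essential supremum of the family `F`. -/
def IsEssSupFam {ι : Sort*} (μ : Measure Ω) (F : ι → Ω → ℝ) (V : Ω → ℝ) : Prop :=
  (∀ i, F i ≤ᵐ[μ] V) ∧ ∀ W : Ω → ℝ, (∀ i, F i ≤ᵐ[μ] W) → V ≤ᵐ[μ] W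

/-- `V` is the essential infimum of the family `F`. -/
def IsEssInfFam {ι : Sort*} (μ : Measure Ω) (F : ι → Ω → ℝ) (V : Ω → ℝ) : Prop :=
  (∀ i, V ≤ᵐ[μ] F i) ∧ ∀ W : Ω → ℝ, (∀ i, W ≤ᵐ[μ] F i) → W ≤ᵐ[μ] V

/-- The square-integrable controls of player 1 starting at `(s,i)`. -/
def ASet (D : Data Ω Γ1 Γ2) (s : ℝ) (i : Γ1) :=
  {A : Control D Γ1 // Starts1 D A s i ∧ SqInt1 D A}

/-- The square-integrable controls of player 2 starting at `(s,j)`. -/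
def BSet (D : Data Ω Γ1 Γ2) (s : ℝ) (j : Γ2) :=
  {B : Control D Γ2 // Starts2 D B s j ∧ SqInt2 D B}

/-- `V` is the lower value `esssup_α essinf_β J(γ(α,β))` of the switching game. -/
def IsLowerValue (D : Data Ω Γ1 Γ2) (s : ℝ) (i : Γ1) (j : Γ2) (V : Ω → ℝ) : Prop :=
  ∃ I : ASet D s i → Ω → ℝ,
    (∀ A : ASet D s i, IsEssInfFam D.μ (fun B : BSet D s j => Jc D s A.1 B.1) (I A)) ∧
    IsEssSupFam D.μ I V

/-- `V` is the upper value `essinf_β esssup_α J(γ(α,β))` of the switching game. -/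
def IsUpperValue (D : Data Ω Γ1 Γ2) (s : ℝ) (i : Γ1) (j : Γ2) (V : Ω → ℝ) : Prop :=
  ∃ I : BSet D s j → Ω → ℝ,
    (∀ B : BSet D s j, IsEssSupFam D.μ (fun A : ASet D s i => Jc D s A.1 B.1) (I B)) ∧
    IsEssInfFam D.μ I V

/-- The interconnected lower barrier `L^{i,j}(Y) = max_{i₁ ≠ i} (Y^{i₁,j} − ĝ^{i,i₁})`. -/
def lowB (D : Data Ω Γ1 Γ2) (Y : Γ1 → Γ2 → ℝ → Ω → ℝ) (i : Γ1) (j : Γ2) (t : ℝ) (ω : Ω) : ℝ :=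
  ⨆ i1 : {i1 : Γ1 // i1 ≠ i}, (Y i1.1 j t ω - D.gh i i1.1 t ω)

/-- The interconnected upper barrier `U^{i,j}(Y) = min_{j₁ ≠ j} (Y^{i,j₁} + ǧ^{j,j₁})`. -/
def upB (D : Data Ω Γ1 Γ2) (Y : Γ1 → Γ2 → ℝ → Ω → ℝ) (i : Γ1) (j : Γ2) (t : ℝ) (ω : Ω) : ℝ :=
  ⨅ j1 : {j1 : Γ2 // j1 ≠ j}, (Y i j1.1 t ω + D.gc j j1.1 t ω)

/-- A solution `(Y, Z, K)` of the system of doubly reflected BSDEs with interconnected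
bilateral obstacles; the stochastic integral `∫ Z dB` is represented by the square-integrable
continuous martingale `M`. -/
structure Solution (D : Data Ω Γ1 Γ2) where
  Y : Γ1 → Γ2 → ℝ → Ω → ℝ
  M : Γ1 → Γ2 → ℝ → Ω → ℝ
  Kp : Γ1 → Γ2 → ℝ → Ω → ℝ
  Km : Γ1 → Γ2 → ℝ → Ω → ℝ
  Y_adapted : ∀ i j, Adapted D.filt (fun t => Y i j t)
  Y_cont : ∀ i j ω, ContinuousOn (fun t => Y i j t ω) (Icc 0 D.T)
  Y_sq : ∀ i j, MemLp (fun ω => ⨆ t : Icc (0:ℝ) D.T, |Y i j t.1 ω|) 2 D.μ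
  M_mart : ∀ i j, Martingale (fun t => M i j t) D.filt D.μ
  M_cont : ∀ i j ω, ContinuousOn (fun t => M i j t ω) (Icc 0 D.T)
  M_zero : ∀ i j ω, M i j 0 ω = 0
  M_sq : ∀ i j, MemLp (M i j D.T) 2 D.μ
  K_adapted : ∀ i j, Adapted D.filt (fun t => Kp i j t) ∧ Adapted D.filt (fun t => Km i j t)
  K_zero : ∀ i j ω, Kp i j 0 ω = 0 ∧ Km i j 0 ω = 0
  K_mono : ∀ i j ω, MonotoneOn (fun t => Kp i j t ω) (Icc 0 D.T) ∧
    MonotoneOn (fun t => Km i j t ω) (Icc 0 D.T)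
  K_cont : ∀ i j ω, ContinuousOn (fun t => Kp i j t ω) (Icc 0 D.T) ∧
    ContinuousOn (fun t => Km i j t ω) (Icc 0 D.T)
  K_sq : ∀ i j, MemLp (fun ω => Kp i j D.T ω + Km i j D.T ω) 2 D.μ
  f_sq : ∀ i j, MemLp (fun ω => ∫ t in (0:ℝ)..D.T, |D.f i j t ω|) 2 D.μ
  h_sq : ∀ i j, MemLp (D.h i j) 2 D.μ
  bsde : ∀ i j, ∀ s ∈ Icc (0:ℝ) D.T, ∀ᵐ ω ∂D.μ,
    Y i j s ω = D.h i j ω + (∫ t in s..D.T, D.f i j t ω)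
      + (Kp i j D.T ω - Kp i j s ω) - (Km i j D.T ω - Km i j s ω)
      - (M i j D.T ω - M i j s ω)
  barriers : ∀ i j, ∀ᵐ ω ∂D.μ, ∀ t ∈ Icc (0:ℝ) D.T,
    lowB D Y i j t ω ≤ Y i j t ω ∧ Y i j t ω ≤ upB D Y i j t ω
  skor_p : ∀ i j, ∀ᵐ ω ∂D.μ, ∀ a b : ℝ, 0 ≤ a → a ≤ b → b ≤ D.T →
    (∀ r ∈ Icc a b, lowB D Y i j r ω < Y i j r ω) → Kp i j b ω = Kp i j a ω
  skor_m : ∀ i j, ∀ᵐ ω ∂D.μ, ∀ a b : ℝ, 0 ≤ a → a ≤ b → b ≤ D.T →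
    (∀ r ∈ Icc a b, Y i j r ω < upB D Y i j r ω) → Km i j b ω = Km i j a ω

/-- The mode-switched stochastic integral `∫_{ρ_0}^{ρ_N} Z^{u_t} dB_t`. -/
def seqM (D : Data Ω Γ1 Γ2) (S : Solution D) (ρ : ℕ → Ω → ℝ) (γ : ℕ → Ω → Γ1 × Γ2)
    (N : ℕ) (ω : Ω) : ℝ :=
  ∑ n ∈ Finset.range N,
    (S.M (γ n ω).1 (γ n ω).2 (ρ (n+1) ω) ω - S.M (γ n ω).1 (γ n ω).2 (ρ n ω) ω)

/-- The mode-switched stochastic integral stopped at time `t`, `M^u_t = ∫_{ρ_0}^{t} Z^{u_r} dB_r`. -/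
def seqMAt (D : Data Ω Γ1 Γ2) (S : Solution D) (ρ : ℕ → Ω → ℝ) (γ : ℕ → Ω → Γ1 × Γ2)
    (t : ℝ) (ω : Ω) : ℝ :=
  limUnder atTop (fun N => ∑ n ∈ Finset.range N,
    (S.M (γ n ω).1 (γ n ω).2 (min t (ρ (n+1) ω)) ω - S.M (γ n ω).1 (γ n ω).2 (min t (ρ n ω)) ω))

/-- First hitting time after `s` of `Y^{i,j}` on its lower barrier (with value `T` if none). -/
def hitLow (D : Data Ω Γ1 Γ2) (S : Solution D) (i : Γ1) (j : Γ2) (s : ℝ) (ω : Ω) : ℝ :=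
  if _ : {t | t ∈ Icc s D.T ∧ S.Y i j t ω = lowB D S.Y i j t ω}.Nonempty
  then min (sInf {t | t ∈ Icc s D.T ∧ S.Y i j t ω = lowB D S.Y i j t ω}) D.T
  else D.T

/-- First hitting time after `s` of `Y^{i,j}` on its upper barrier (with value `T` if none). -/
def hitUp (D : Data Ω Γ1 Γ2) (S : Solution D) (i : Γ1) (j : Γ2) (s : ℝ) (ω : Ω) : ℝ :=
  if _ : {t | t ∈ Icc s D.T ∧ S.Y i j t ω = upB D S.Y i j t ω}.Nonempty
  then min (sInf {t | t ∈ Icc s D.T ∧ S.Y i j t ω = upB D S.Y i j t ω}) D.T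
  else D.T

/-- The argmax switching selector `𝓛^{i,j}_t(Y)`. -/
def selL (D : Data Ω Γ1 Γ2) (S : Solution D) (i : Γ1) (j : Γ2) (t : ℝ) (ω : Ω) : Γ1 :=
  Classical.choose (Finset.exists_max_image (Finset.univ.erase i)
    (fun i1 => S.Y i1 j t ω - D.gh i i1 t ω)
    (by obtain ⟨b, hb⟩ := exists_ne i
        exact ⟨b, Finset.mem_erase.mpr ⟨hb, Finset.mem_univ b⟩⟩))

/-- The argmin switching selector `𝓤^{i,j}_t(Y)`. -/
def selU (D : Data Ω Γ1 Γ2) (S : Solution D) (i : Γ1) (j : Γ2) (t : ℝ) (ω : Ω) : Γ2 :=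
  Classical.choose (Finset.exists_min_image (Finset.univ.erase j)
    (fun j1 => S.Y i j1 t ω + D.gc j j1 t ω)
    (by obtain ⟨b, hb⟩ := exists_ne j
        exact ⟨b, Finset.mem_erase.mpr ⟨hb, Finset.mem_univ b⟩⟩))

/-- The equilibrium joint sequence `(ρ_n, γ_n)` built from the barrier hitting times of the
DRBSDE solution and the argmax/argmin selectors. -/
def eqSt (D : Data Ω Γ1 Γ2) (S : Solution D) (s : ℝ) (i : Γ1) (j : Γ2) :
    ℕ → Ω → ℝ × (Γ1 × Γ2)
  | 0, _ => (s, (i, j))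
  | (n+1), ω =>
    let p := eqSt D S s i j n ω
    let a := hitLow D S p.2.1 p.2.2 p.1 ω
    let b := hitUp D S p.2.1 p.2.2 p.1 ω
    let ρ := min a b
    let γ := if a ≤ b ∧ a < D.T then (selL D S p.2.1 p.2.2 ρ ω, p.2.2)
             else if b < a then (p.2.1, selU D S p.2.1 p.2.2 ρ ω)
             else p.2
    (ρ, γ)

/-- The equilibrium switching times `ρ_n`. -/
def eqRho (D : Data Ω Γ1 Γ2) (S : Solution D) (s : ℝ) (i : Γ1) (j : Γ2) (n : ℕ) (ω : Ω) : ℝ :=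
  (eqSt D S s i j n ω).1

/-- The equilibrium joint modes `γ_n`. -/
def eqGam (D : Data Ω Γ1 Γ2) (S : Solution D) (s : ℝ) (i : Γ1) (j : Γ2) (n : ℕ) (ω : Ω) :
    Γ1 × Γ2 :=
  (eqSt D S s i j n ω).2

/-- The indices at which player 1's component of the equilibrium joint mode changes. -/
def idx1 (D : Data Ω Γ1 Γ2) (S : Solution D) (s : ℝ) (i : Γ1) (j : Γ2) : ℕ → Ω → ℕ
  | 0, _ => 0
  | (k+1), ω =>
    let m := idx1 D S s i j k ω
    if hp : ∃ n, m < n ∧ (eqGam D S s i j n ω).1 ≠ (eqGam D S s i j m ω).1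
    then Nat.find hp else m

/-- Player 1's equilibrium switching times `σ*_k`. -/
def sigStar (D : Data Ω Γ1 Γ2) (S : Solution D) (s : ℝ) (i : Γ1) (j : Γ2) : ℕ → Ω → ℝ
  | 0, _ => s
  | (k+1), ω =>
    if idx1 D S s i j (k+1) ω = idx1 D S s i j k ω then D.T
    else eqRho D S s i j (idx1 D S s i j (k+1) ω) ω

/-- Player 1's equilibrium modes `ξ*_k`. -/
def xiStar (D : Data Ω Γ1 Γ2) (S : Solution D) (s : ℝ) (i : Γ1) (j : Γ2) (k : ℕ) (ω : Ω) : Γ1 :=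
  (eqGam D S s i j (idx1 D S s i j k ω) ω).1

/-- The state `(ř_n, ρ_n, γ_n, τ̌_n)` of player 2's equilibrium-response to an arbitrary
control `(σ, ξ)` of player 1, built from upper-barrier hitting times and the argmin selector. -/
def resp (D : Data Ω Γ1 Γ2) (S : Solution D) (i : Γ1) (j : Γ2) (s : ℝ)
    (σ : ℕ → Ω → ℝ) (ξ : ℕ → Ω → Γ1) : ℕ → Ω → ℕ × ℝ × (Γ1 × Γ2) × ℝ
  | 0, _ => (0, s, (i, j), s)
  | 1, ω =>
    let tc := hitUp D S i j s ω
    let ρ := min (σ 1 ω) tc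
    let γ := if σ 1 ω ≤ tc ∧ σ 1 ω < D.T then (ξ 1 ω, j)
             else if tc < σ 1 ω then (i, selU D S i j ρ ω)
             else (i, j)
    (1, ρ, γ, tc)
  | (n+2), ω =>
    let q := resp D S i j s σ ξ (n+1) ω
    let r := q.1 + (if σ q.1 ω ≤ q.2.2.2 then 1 else 0)
    let tc := hitUp D S q.2.2.1.1 q.2.2.1.2 q.2.1 ω
    let ρ := min (σ r ω) tc
    let γ := if σ r ω ≤ tc ∧ σ r ω < D.T then (ξ r ω, q.2.2.1.2)
             else if tc < σ r ω then (q.2.2.1.1, selU D S q.2.2.1.1 q.2.2.1.2 ρ ω)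
             else q.2.2.1
    (r, ρ, γ, tc)

/-- The switching times of the coupling of `(σ,ξ)` with player 2's equilibrium response. -/
def respRho (D : Data Ω Γ1 Γ2) (S : Solution D) (i : Γ1) (j : Γ2) (s : ℝ)
    (σ : ℕ → Ω → ℝ) (ξ : ℕ → Ω → Γ1) (n : ℕ) (ω : Ω) : ℝ :=
  (resp D S i j s σ ξ n ω).2.1

/-- The joint modes of the coupling of `(σ,ξ)` with player 2's equilibrium response. -/
def respGam (D : Data Ω Γ1 Γ2) (S : Solution D) (i : Γ1) (j : Γ2) (s : ℝ)
    (σ : ℕ → Ω → ℝ) (ξ : ℕ → Ω → Γ1) (n : ℕ) (ω : Ω) : Γ1 × Γ2 :=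
  (resp D S i j s σ ξ n ω).2.2.1

/-- The current-mode indicator of a single control. -/
def modeInd {Γ : Type} (σ : ℕ → Ω → ℝ) (ξ : ℕ → Ω → Γ) (t : ℝ) (ω : Ω) : Γ :=
  ξ (sInf {n : ℕ | t ≤ σ (n+1) ω}) ω

/-- Two controls are equivalent on the stochastic interval `[s, ν]`. -/
def EquivOn (D : Data Ω Γ1 Γ2) {Γ : Type} [MeasurableSpace Γ] (s : ℝ) (ν : Ω → ℝ)
    (A A' : Control D Γ) : Prop :=
  ∀ᵐ ω ∂D.μ, ∀ t, s ≤ t → t ≤ ν ω → modeInd A.τ A.ξ t ω = modeInd A'.τ A'.ξ t ω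

/-- A non-anticipative strategy for player 1. -/
structure Strat1 (D : Data Ω Γ1 Γ2) where
  map : Control D Γ2 → Control D Γ1
  na : ∀ s ∈ Icc (0:ℝ) D.T, ∀ ν : Ω → ℝ, IsStoppingTime D.filt (fun ω => ((ν ω : ℝ) : WithTop ℝ)) → (∀ ω, ν ω ∈ Icc s D.T) →
    ∀ B B' : Control D Γ2, EquivOn D s ν B B' → EquivOn D s ν (map B) (map B')
  sq : ∀ B, SqInt2 D B → SqInt1 D (map B)

/-- A non-anticipative strategy for player 2. -/
structure Strat2 (D : Data Ω Γ1 Γ2) where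
  map : Control D Γ1 → Control D Γ2
  na : ∀ s ∈ Icc (0:ℝ) D.T, ∀ ν : Ω → ℝ, IsStoppingTime D.filt (fun ω => ((ν ω : ℝ) : WithTop ℝ)) → (∀ ω, ν ω ∈ Icc s D.T) →
    ∀ A A' : Control D Γ1, EquivOn D s ν A A' → EquivOn D s ν (map A) (map A')
  sq : ∀ A, SqInt1 D A → SqInt2 D (map A)

/-- Nonnegativity of the switching costs. -/
def NonNegCosts (D : Data Ω Γ1 Γ2) : Prop :=
  (∀ i i1 t ω, 0 ≤ D.gh i i1 t ω) ∧ ∀ j j1 t ω, 0 ≤ D.gc j j1 t ω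

/-- Vanishing of the diagonal switching costs. -/
def DiagZero (D : Data Ω Γ1 Γ2) : Prop :=
  (∀ i t ω, D.gh i i t ω = 0) ∧ ∀ j t ω, D.gc j j t ω = 0

/-- Consistency (strict triangle inequality) of the switching costs. -/
def Consistent (D : Data Ω Γ1 Γ2) : Prop :=
  (∀ i1 i2 i3 : Γ1, i1 ≠ i2 → i2 ≠ i3 → ∀ t ∈ Icc (0:ℝ) D.T, ∀ᵐ ω ∂D.μ,
    D.gh i1 i3 t ω < D.gh i1 i2 t ω + D.gh i2 i3 t ω) ∧
  (∀ j1 j2 j3 : Γ2, j1 ≠ j2 → j2 ≠ j3 → ∀ t ∈ Icc (0:ℝ) D.T, ∀ᵐ ω ∂D.μ,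
    D.gc j1 j3 t ω < D.gc j1 j2 t ω + D.gc j2 j3 t ω)

/-- Terminal consistency of the terminal rewards with the switching costs. -/
def TerminalConsistent (D : Data Ω Γ1 Γ2) : Prop :=
  ∀ (i : Γ1) (j : Γ2), ∀ᵐ ω ∂D.μ,
    (⨆ i1 : {i1 : Γ1 // i1 ≠ i}, (D.h i1.1 j ω - D.gh i i1.1 D.T ω)) ≤ D.h i j ω ∧
    D.h i j ω ≤ ⨅ j1 : {j1 : Γ2 // j1 ≠ j}, (D.h i j1.1 ω + D.gc j j1.1 D.T ω)

/-- The non-free loop property: the signed cost sum around any loop in `Γ` is a.s. nonzero. -/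
def NonFreeLoop (D : Data Ω Γ1 Γ2) : Prop :=
  ∀ (N : ℕ) (p : ℕ → Γ1 × Γ2), 2 ≤ N → p (N-1) = p 0 →
    (∀ q < N-1, ∀ q' < N-1, p q = p q' → q = q') →
    (∀ q < N-1, (p (q+1)).1 = (p q).1 ∨ (p (q+1)).2 = (p q).2) →
    ∀ t ∈ Icc (0:ℝ) D.T, ∀ᵐ ω ∂D.μ,
      (∑ q ∈ Finset.range (N-1),
        (-(if (p q).1 ≠ (p (q+1)).1 then D.gh (p q).1 (p (q+1)).1 t ω else 0)
          + (if (p q).2 ≠ (p (q+1)).2 then D.gc (p q).2 (p (q+1)).2 t ω else 0))) ≠ 0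

/-- Pathwise continuity of the switching cost processes. -/
def ContCosts (D : Data Ω Γ1 Γ2) : Prop :=
  (∀ i i1 ω, ContinuousOn (fun t => D.gh i i1 t ω) (Icc 0 D.T)) ∧
  (∀ j j1 ω, ContinuousOn (fun t => D.gc j j1 t ω) (Icc 0 D.T))

set_option linter.unusedSectionVars false in
private lemma seq_lim_const {c : ℕ → ℝ} {K : ℕ} (h : ∀ k, K ≤ k → c (k+1) = c k) {L : ℝ}
    (hL : Tendsto c atTop (nhds L)) : ∀ k, K ≤ k → c k = L := by
  have hc : ∀ k, K ≤ k → c k = c K := by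
    intro k hk
    induction k, hk using Nat.le_induction with
    | base => rfl
    | succ n hn ih => rw [h n hn, ih]
  have h2 : Tendsto c atTop (nhds (c K)) := by
    refine Tendsto.congr' ?_ tendsto_const_nhds
    filter_upwards [eventually_ge_atTop K] with k hk using (hc k hk).symm
  intro k hk
  rw [hc k hk, tendsto_nhds_unique h2 hL]

private lemma mono_nat_unbounded_or_const {f : ℕ → ℕ} (hf : Monotone f) :
    (∀ m, ∃ n, m ≤ f n) ∨ ∃ N, ∀ n, N ≤ n → f n = f N := by
  by_cases h : ∀ m, ∃ n, m ≤ f n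
  · exact Or.inl h
  · right
    push_neg at h
    obtain ⟨m, hm⟩ := h
    have hbd : BddAbove (Set.range f) := ⟨m, by rintro x ⟨n, rfl⟩; exact (hm n).le⟩
    obtain ⟨N, hN⟩ := Nat.sSup_mem (Set.range_nonempty f) hbd
    exact ⟨N, fun n hn => le_antisymm (hN ▸ le_csSup hbd ⟨n, rfl⟩) (hf hn)⟩

private lemma coupling_tail {T : ℝ} {σ τ : ℕ → ℝ} {f g : ℕ → ℕ} {K1 K2 : ℕ}
    (hσle : ∀ n, σ n ≤ T) (hτle : ∀ n, τ n ≤ T)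
    (hσT : ∀ n, K1 ≤ n → σ n = T) (hτT : ∀ n, K2 ≤ n → τ n = T)
    (hf0 : f 0 = 1) (hg0 : g 0 = 1)
    (hstep : ∀ n, (σ (f n) ≤ τ (g n) ∧ f (n+1) = f n + 1 ∧ g (n+1) = g n) ∨
      (τ (g n) < σ (f n) ∧ f (n+1) = f n ∧ g (n+1) = g n + 1)) :
    (∃ N, ∀ n, N ≤ n → K1 + 1 ≤ f n) ∧
    ((∃ N, ∀ n, N ≤ n → K2 + 1 ≤ g n) ∨ (∃ s, 1 ≤ s ∧ τ s = T ∧ ∃ N, ∀ n, N ≤ n → g n = s)) := by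
  have hfm : Monotone f :=
    monotone_nat_of_le_succ (fun n => by rcases hstep n with ⟨_,h,_⟩|⟨_,h,_⟩ <;> omega)
  have hgm : Monotone g :=
    monotone_nat_of_le_succ (fun n => by rcases hstep n with ⟨_,_,h⟩|⟨_,_,h⟩ <;> omega)
  have hsum : ∀ n, f n + g n = n + 2 := by
    intro n
    induction n with
    | zero => omega
    | succ n ih => rcases hstep n with ⟨_,h,h'⟩|⟨_,h,h'⟩ <;> omega
  constructor
  · rcases mono_nat_unbounded_or_const hfm with hub | ⟨N, hN⟩
    · obtain ⟨n0, h0⟩ := hub (K1+1)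
      exact ⟨n0, fun n hn => h0.trans (hfm hn)⟩
    · exfalso
      set m := max N (K2 + f N) with hm
      have hm1 : N ≤ m := le_max_left _ _
      have hm2 : K2 + f N ≤ m := le_max_right _ _
      have e2 : f m = f N := hN _ hm1
      have e3 : f (m+1) = f N := hN _ (hm1.trans (Nat.le_succ m))
      have hs := hsum m
      have hgmK : K2 ≤ g m := by omega
      rcases hstep m with ⟨h, h1, h2⟩ | ⟨h, h1, h2⟩
      · omega
      · have e4 := hτT _ hgmK
        have e5 := hσle (f m)
        rw [e4] at h
        linarith
  · rcases mono_nat_unbounded_or_const hgm with hub | ⟨N, hN⟩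
    · left
      obtain ⟨n0, h0⟩ := hub (K2+1)
      exact ⟨n0, fun n hn => h0.trans (hgm hn)⟩
    · right
      refine ⟨g N, ?_, ?_, N, hN⟩
      · have := hgm (Nat.zero_le N); omega
      · set m := max N (K1 + g N) with hm
        have hm1 : N ≤ m := le_max_left _ _
        have hm2 : K1 + g N ≤ m := le_max_right _ _
        have e2 : g m = g N := hN _ hm1
        have e3 : g (m+1) = g N := hN _ (hm1.trans (Nat.le_succ m))
        have hs := hsum m
        have hfmK : K1 ≤ f m := by omega
        rcases hstep m with ⟨h, h1, h2⟩ | ⟨h, h1, h2⟩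
        · rw [← e2]
          exact le_antisymm (hτle _) (by rw [← hσT _ hfmK]; exact h)
        · omega

set_option linter.unusedSectionVars false in
private lemma cost1_succ (D : Data Ω Γ1 Γ2) (A : Control D Γ1) (k : ℕ) (ω : Ω) :
    cost1 D A (k+1) ω = cost1 D A k ω + D.gh (A.ξ k ω) (A.ξ (k+1) ω) (A.τ (k+1) ω) ω :=
  Finset.sum_range_succ _ _

set_option linter.unusedSectionVars false in
private lemma cost2_succ (D : Data Ω Γ1 Γ2) (B : Control D Γ2) (k : ℕ) (ω : Ω) :
    cost2 D B (k+1) ω = cost2 D B k ω + D.gc (B.ξ k ω) (B.ξ (k+1) ω) (B.τ (k+1) ω) ω :=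
  Finset.sum_range_succ _ _

set_option linter.unusedSectionVars false in
private lemma seqCost_succ (D : Data Ω Γ1 Γ2) (ρ : ℕ → Ω → ℝ) (γ : ℕ → Ω → Γ1 × Γ2) (n : ℕ)
    (ω : Ω) :
    seqCost D ρ γ (n+1) ω = seqCost D ρ γ n ω +
      (D.gh (γ n ω).1 (γ (n+1) ω).1 (ρ (n+1) ω) ω - D.gc (γ n ω).2 (γ (n+1) ω).2 (ρ (n+1) ω) ω) :=
  Finset.sum_range_succ _ _

/-- `lim C^{γ(α,β)}_N = lim C^α_N − lim C^β_N`. -/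
theorem jointCost_lim_eq_sub
    (D : Data Ω Γ1 Γ2) (hdiag : DiagZero D)
    (A : Control D Γ1) (B : Control D Γ2) (CA CB : Ω → ℝ)
    (hCA : ∀ᵐ ω ∂D.μ, Tendsto (fun N => cost1 D A N ω) atTop (nhds (CA ω)))
    (hCB : ∀ᵐ ω ∂D.μ, Tendsto (fun N => cost2 D B N ω) atTop (nhds (CB ω))) :
    ∀ᵐ ω ∂D.μ, Tendsto
      (fun N => seqCost D (cplRho A.τ B.τ) (cplGam D.T A.τ A.ξ B.τ B.ξ) N ω)
      atTop (nhds (CA ω - CB ω)) := by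
  obtain ⟨hd1, hd2⟩ := hdiag
  have hm1 : ∀ᵐ ω ∂D.μ, ∀ n, A.τ n ω ≤ A.τ (n+1) ω := ae_all_iff.2 A.mono
  have hm2 : ∀ᵐ ω ∂D.μ, ∀ n, B.τ n ω ≤ B.τ (n+1) ω := ae_all_iff.2 B.mono
  have hst1 : ∀ᵐ ω ∂D.μ, ∀ n : ℕ, A.τ (n+1) ω = D.T → A.ξ (n+1) ω = A.ξ n ω := by
    rw [ae_all_iff]
    intro n
    filter_upwards [A.stay (n+1) (by omega)] with ω hω h
    simpa using hω h
  have hst2 : ∀ᵐ ω ∂D.μ, ∀ n : ℕ, B.τ (n+1) ω = D.T → B.ξ (n+1) ω = B.ξ n ω := by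
    rw [ae_all_iff]
    intro n
    filter_upwards [B.stay (n+1) (by omega)] with ω hω h
    simpa using hω h
  have hT1 : ∀ᵐ ω ∂D.μ, ∃ n, D.T ≤ A.τ n ω := by
    rw [ae_iff]
    refine measure_mono_null (fun ω hω => ?_) A.no_acc
    simp only [Set.mem_setOf_eq, not_exists, not_le] at hω ⊢
    exact hω
  have hT2 : ∀ᵐ ω ∂D.μ, ∃ n, D.T ≤ B.τ n ω := by
    rw [ae_iff]
    refine measure_mono_null (fun ω hω => ?_) B.no_acc
    simp only [Set.mem_setOf_eq, not_exists, not_le] at hω ⊢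
    exact hω
  filter_upwards [hm1, hm2, hst1, hst2, hT1, hT2, hCA, hCB] with ω hm1 hm2 hst1 hst2 hT1 hT2
    hCA hCB
  have hmon1 : Monotone fun n => A.τ n ω := monotone_nat_of_le_succ hm1
  have hmon2 : Monotone fun n => B.τ n ω := monotone_nat_of_le_succ hm2
  obtain ⟨K1, hK1'⟩ := hT1
  obtain ⟨K2, hK2'⟩ := hT2
  have hK1 : ∀ n, K1 ≤ n → A.τ n ω = D.T := fun n hn =>
    le_antisymm (A.mem_Icc n ω).2 (hK1'.trans (hmon1 hn))
  have hK2 : ∀ n, K2 ≤ n → B.τ n ω = D.T := fun n hn =>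
    le_antisymm (B.mem_Icc n ω).2 (hK2'.trans (hmon2 hn))
  have hc1 : ∀ k, K1 ≤ k → cost1 D A k ω = CA ω := by
    refine seq_lim_const (fun k hk => ?_) hCA
    have hx : A.ξ (k+1) ω = A.ξ k ω := hst1 k (hK1 (k+1) (by omega))
    rw [cost1_succ, hx, hd1, add_zero]
  have hc2 : ∀ k, K2 ≤ k → cost2 D B k ω = CB ω := by
    refine seq_lim_const (fun k hk => ?_) hCB
    have hx : B.ξ (k+1) ω = B.ξ k ω := hst2 k (hK2 (k+1) (by omega))
    rw [cost2_succ, hx, hd2, add_zero]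
  -- the main invariant of the coupling
  have key : ∀ n : ℕ,
      1 ≤ (cplIdx A.τ B.τ (n+1) ω).1 ∧ 1 ≤ (cplIdx A.τ B.τ (n+1) ω).2 ∧
      (cplGam D.T A.τ A.ξ B.τ B.ξ n ω).1 = A.ξ ((cplIdx A.τ B.τ (n+1) ω).1 - 1) ω ∧
      (cplGam D.T A.τ A.ξ B.τ B.ξ n ω).2 = B.ξ ((cplIdx A.τ B.τ (n+1) ω).2 - 1) ω ∧
      seqCost D (cplRho A.τ B.τ) (cplGam D.T A.τ A.ξ B.τ B.ξ) n ω
        = cost1 D A ((cplIdx A.τ B.τ (n+1) ω).1 - 1) ω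
          - cost2 D B ((cplIdx A.τ B.τ (n+1) ω).2 - 1) ω := by
    intro n
    induction n with
    | zero => simp [cplIdx, cplGam, seqCost, cost1, cost2]
    | succ n ih =>
      obtain ⟨hr1, hs1, hg1, hg2, hcost⟩ := ih
      have hidx : cplIdx A.τ B.τ (n+1+1) ω =
          ((cplIdx A.τ B.τ (n+1) ω).1 +
            (if A.τ (cplIdx A.τ B.τ (n+1) ω).1 ω ≤ B.τ (cplIdx A.τ B.τ (n+1) ω).2 ω
              then 1 else 0),
           (cplIdx A.τ B.τ (n+1) ω).2 +
            (if B.τ (cplIdx A.τ B.τ (n+1) ω).2 ω < A.τ (cplIdx A.τ B.τ (n+1) ω).1 ω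
              then 1 else 0)) := rfl
      have hgam : cplGam D.T A.τ A.ξ B.τ B.ξ (n+1) ω =
          (if A.τ (cplIdx A.τ B.τ (n+1) ω).1 ω ≤ B.τ (cplIdx A.τ B.τ (n+1) ω).2 ω ∧
              A.τ (cplIdx A.τ B.τ (n+1) ω).1 ω < D.T
            then (A.ξ (cplIdx A.τ B.τ (n+1) ω).1 ω, (cplGam D.T A.τ A.ξ B.τ B.ξ n ω).2)
            else if B.τ (cplIdx A.τ B.τ (n+1) ω).2 ω < A.τ (cplIdx A.τ B.τ (n+1) ω).1 ω
              then ((cplGam D.T A.τ A.ξ B.τ B.ξ n ω).1, B.ξ (cplIdx A.τ B.τ (n+1) ω).2 ω)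
              else cplGam D.T A.τ A.ξ B.τ B.ξ n ω) := rfl
      have hrho : cplRho A.τ B.τ (n+1) ω =
          min (A.τ (cplIdx A.τ B.τ (n+1) ω).1 ω) (B.τ (cplIdx A.τ B.τ (n+1) ω).2 ω) := rfl
      set r := (cplIdx A.τ B.τ (n+1) ω).1 with hrd
      set s := (cplIdx A.τ B.τ (n+1) ω).2 with hsd
      have hcost1r : cost1 D A r ω
          = cost1 D A (r-1) ω + D.gh (A.ξ (r-1) ω) (A.ξ r ω) (A.τ r ω) ω := by
        have h := cost1_succ D A (r-1) ω
        rw [show r - 1 + 1 = r by omega] at h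
        exact h
      have hcost2s : cost2 D B s ω
          = cost2 D B (s-1) ω + D.gc (B.ξ (s-1) ω) (B.ξ s ω) (B.τ s ω) ω := by
        have h := cost2_succ D B (s-1) ω
        rw [show s - 1 + 1 = s by omega] at h
        exact h
      rw [seqCost_succ, hrho, hcost, hg1, hg2]
      by_cases h1 : A.τ r ω ≤ B.τ s ω
      · have hidx' : cplIdx A.τ B.τ (n+1+1) ω = (r+1, s) := by
          rw [hidx, if_pos h1, if_neg (not_lt.2 h1), add_zero]
        by_cases h2 : A.τ r ω < D.T
        · -- player 1 switches strictly before T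
          have hgam' : cplGam D.T A.τ A.ξ B.τ B.ξ (n+1) ω
              = (A.ξ r ω, (cplGam D.T A.τ A.ξ B.τ B.ξ n ω).2) := by
            rw [hgam, if_pos ⟨h1, h2⟩]
          rw [hidx', hgam', hg2, min_eq_left h1]
          refine ⟨by omega, hs1, by simp, by simp, ?_⟩
          simp only [Nat.add_sub_cancel, hd2]
          rw [hcost1r]
          ring
        · -- tie at the horizon: nothing changes
          have hσT : A.τ r ω = D.T := le_antisymm (A.mem_Icc r ω).2 (not_lt.1 h2)
          have hgam' : cplGam D.T A.τ A.ξ B.τ B.ξ (n+1) ω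
              = cplGam D.T A.τ A.ξ B.τ B.ξ n ω := by
            rw [hgam, if_neg (fun h => h2 h.2), if_neg (not_lt.2 h1)]
          have hξ : A.ξ r ω = A.ξ (r-1) ω := by
            have h := hst1 (r-1)
            rw [show r - 1 + 1 = r by omega] at h
            exact h hσT
          rw [hidx', hgam', hg1, hg2, hd1, hd2]
          refine ⟨by omega, hs1, ?_, by simp [hg2], ?_⟩
          · simp only [Nat.add_sub_cancel]
            exact hξ.symm
          · simp only [Nat.add_sub_cancel]
            rw [hcost1r, hξ, hd1]
            ring
      · -- player 2 switches
        have hlt : B.τ s ω < A.τ r ω := not_le.1 h1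
        have hidx' : cplIdx A.τ B.τ (n+1+1) ω = (r, s+1) := by
          rw [hidx, if_neg h1, if_pos hlt, add_zero]
        have hgam' : cplGam D.T A.τ A.ξ B.τ B.ξ (n+1) ω
            = ((cplGam D.T A.τ A.ξ B.τ B.ξ n ω).1, B.ξ s ω) := by
          rw [hgam, if_neg (fun h => h1 h.1), if_pos hlt]
        rw [hidx', hgam', hg1, min_eq_right hlt.le]
        refine ⟨hr1, by omega, by simp [hg1], by simp, ?_⟩
        simp only [Nat.add_sub_cancel, hd1]
        rw [hcost2s]
        ring
  -- the step relation of the coupling indices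
  have hstep : ∀ n : ℕ,
      (A.τ ((cplIdx A.τ B.τ (n+1) ω).1) ω ≤ B.τ ((cplIdx A.τ B.τ (n+1) ω).2) ω ∧
        (cplIdx A.τ B.τ (n+1+1) ω).1 = (cplIdx A.τ B.τ (n+1) ω).1 + 1 ∧
        (cplIdx A.τ B.τ (n+1+1) ω).2 = (cplIdx A.τ B.τ (n+1) ω).2) ∨
      (B.τ ((cplIdx A.τ B.τ (n+1) ω).2) ω < A.τ ((cplIdx A.τ B.τ (n+1) ω).1) ω ∧
        (cplIdx A.τ B.τ (n+1+1) ω).1 = (cplIdx A.τ B.τ (n+1) ω).1 ∧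
        (cplIdx A.τ B.τ (n+1+1) ω).2 = (cplIdx A.τ B.τ (n+1) ω).2 + 1) := by
    intro n
    have hidx : cplIdx A.τ B.τ (n+1+1) ω =
        ((cplIdx A.τ B.τ (n+1) ω).1 +
          (if A.τ (cplIdx A.τ B.τ (n+1) ω).1 ω ≤ B.τ (cplIdx A.τ B.τ (n+1) ω).2 ω
            then 1 else 0),
         (cplIdx A.τ B.τ (n+1) ω).2 +
          (if B.τ (cplIdx A.τ B.τ (n+1) ω).2 ω < A.τ (cplIdx A.τ B.τ (n+1) ω).1 ω
            then 1 else 0)) := rfl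
    by_cases h : A.τ ((cplIdx A.τ B.τ (n+1) ω).1) ω ≤ B.τ ((cplIdx A.τ B.τ (n+1) ω).2) ω
    · left
      rw [hidx, if_pos h, if_neg (not_lt.2 h), add_zero]
      exact ⟨h, rfl, rfl⟩
    · right
      rw [hidx, if_neg h, if_pos (not_le.1 h), add_zero]
      exact ⟨not_le.1 h, rfl, rfl⟩
  obtain ⟨⟨Na, hNa⟩, hBB⟩ := coupling_tail
    (σ := fun n => A.τ n ω) (τ := fun n => B.τ n ω)
    (f := fun n => (cplIdx A.τ B.τ (n+1) ω).1) (g := fun n => (cplIdx A.τ B.τ (n+1) ω).2)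
    (fun n => (A.mem_Icc n ω).2) (fun n => (B.mem_Icc n ω).2) hK1 hK2 rfl rfl hstep
  have hBc : ∃ Nb, ∀ n, Nb ≤ n → cost2 D B ((cplIdx A.τ B.τ (n+1) ω).2 - 1) ω = CB ω := by
    rcases hBB with ⟨Nb, hNb⟩ | ⟨p, hp1, hpT, Nb, hNb⟩
    · exact ⟨Nb, fun n hn => hc2 _ (by have := hNb n hn; omega)⟩
    · have hτk : ∀ k, p ≤ k → B.τ k ω = D.T := fun k hk =>
        le_antisymm (B.mem_Icc k ω).2 (hpT ▸ hmon2 hk)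
      have hce : ∀ k, p - 1 ≤ k → cost2 D B k ω = CB ω := by
        refine seq_lim_const (fun k hk => ?_) hCB
        have hx : B.ξ (k+1) ω = B.ξ k ω := hst2 k (hτk (k+1) (by omega))
        rw [cost2_succ, hx, hd2, add_zero]
      refine ⟨Nb, fun n hn => ?_⟩
      have := hNb n hn
      rw [this]
      exact hce _ le_rfl
  obtain ⟨Nb, hNb⟩ := hBc
  refine Tendsto.congr' ?_ tendsto_const_nhds
  filter_upwards [eventually_ge_atTop (max Na Nb)] with n hn
  have h5 := (key n).2.2.2.2
  rw [hc1 _ (by have := hNa n (le_of_max_le_left hn); omega),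
    hNb n (le_of_max_le_right hn)] at h5
  exact h5.symm


end ZSG
end
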